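/- Let p be a prime and k an integer not divisible by p. Then for every natural number m, A_k^m equals the 2×2 identity matrix if and only if p divides m. -/

import Mathlib

/-- The 2×2 real rotation matrix `A_k` by angle `2kπ/p`, the transition matrix of the
two-state QFA `M_k` for the language `MOD_p` on input symbol `a`. -/
noncomputable def Ak (p : ℕ) (k : ℤ) : Matrix (Fin 2) (Fin 2) ℝ :=
  !![Real.cos (2 * k * Real.pi / p), -Real.sin (2 * k * Real.pi / p);
     Real.sin (2 * k * Real.pi / p),  Real.cos (2 * k * Real.pi / p)]

lemma ak_pow (p : ℕ) (k : ℤ) : ∀ m : ℕ, Ak p k ^ m =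
    !![Real.cos (m * (2 * k * Real.pi / p)), -Real.sin (m * (2 * k * Real.pi / p));
       Real.sin (m * (2 * k * Real.pi / p)),  Real.cos (m * (2 * k * Real.pi / p))]
  | 0 => by simp [Matrix.one_fin_two]
  | (m + 1) => by
    rw [pow_succ, ak_pow p k m, Ak]
    have : ((m + 1 : ℕ) : ℝ) * (2 * k * Real.pi / p)
        = m * (2 * k * Real.pi / p) + 2 * k * Real.pi / p := by push_cast; ring
    rw [this, Real.cos_add, Real.sin_add]
    ext i j
    fin_cases i <;> fin_cases j <;>
      simp [Matrix.mul_apply, Fin.sum_univ_two] <;> ring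

/-- For `p` prime and `p ∤ k`, the power `A_k ^ m` is the identity iff `p ∣ m`. -/
theorem ak_pow_eq_one_iff (p : ℕ) (hp : p.Prime) (k : ℤ) (hk : ¬ (p : ℤ) ∣ k) (m : ℕ) :
    Ak p k ^ m = 1 ↔ p ∣ m := by
  have hpR : (p : ℝ) ≠ 0 := Nat.cast_ne_zero.mpr hp.pos.ne'
  have hpi := Real.pi_ne_zero
  rw [ak_pow]
  constructor
  · intro h
    have hcos : Real.cos (m * (2 * k * Real.pi / p)) = 1 := by
      have := congrFun (congrFun h 0) 0
      simpa [Matrix.one_fin_two] using this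
    obtain ⟨n, hn⟩ := Real.cos_eq_one_iff _ |>.mp hcos
    have hreal : (n : ℝ) * p = m * k := by
      have h2 : (2 * Real.pi) * ((n : ℝ) * p) = (2 * Real.pi) * (m * k) := by
        field_simp at hn
        rw [hn]
      have h2pi : (2 * Real.pi) ≠ 0 := by positivity
      exact mul_left_cancel₀ h2pi h2
    have hint : (n : ℤ) * p = m * k := by exact_mod_cast hreal
    have hdvd : (p : ℤ) ∣ (m : ℤ) * k := ⟨n, by linarith [hint]⟩
    have hpz : Prime (p : ℤ) := Nat.prime_iff_prime_int.mp hp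
    rcases (hpz.dvd_mul.mp hdvd) with h1 | h2
    · exact_mod_cast h1
    · exact absurd h2 hk
  · rintro ⟨c, rfl⟩
    have hang : ((p * c : ℕ) : ℝ) * (2 * k * Real.pi / p) = (2 * c * k : ℤ) * Real.pi := by
      push_cast; field_simp
    have hang2 : ((p * c : ℕ) : ℝ) * (2 * k * Real.pi / p) = (c * k : ℤ) * (2 * Real.pi) := by
      push_cast; field_simp
    have hcos : Real.cos (((p * c : ℕ) : ℝ) * (2 * k * Real.pi / p)) = 1 := by
      rw [hang2]; exact Real.cos_int_mul_two_pi _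
    have hsin : Real.sin (((p * c : ℕ) : ℝ) * (2 * k * Real.pi / p)) = 0 := by
      rw [hang]; exact Real.sin_int_mul_pi _
    rw [hcos, hsin, Matrix.one_fin_two]
    norm_num
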